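/- Let a satisfy a(1)=1, a(d) = (2d-1)!! − ∑_{k=1}^{d-1}(2d-2k-1)!!·a(k) for d ≥ 2, and let b(d) = ((2d-3)²+1)·(2d-5)!!. Then for all d ≥ 4, a(d)/b(d) < 1 − 1/((2d-3)²+1), i.e. a(d)·((2d-3)²+1) < b(d)·(2d-3)². -/
import Mathlib

/-- The double factorial `(2d-1)!! = ∏_{i=1}^d (2i-1)`, with `(-1)!! = oddDF 0 = 1`. -/
def oddDF (d : ℕ) : ℕ := ∏ i ∈ Finset.range d, (2 * i + 1)

lemma oddDF_succ (n : ℕ) : oddDF (n + 1) = (2 * n + 1) * oddDF n := by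
  simp [oddDF, Finset.prod_range_succ, Nat.mul_comm]

lemma oddDF_pos (n : ℕ) : 0 < oddDF n := by
  induction n with
  | zero => simp [oddDF]
  | succ n ih => rw [oddDF_succ]; positivity

lemma lemG : ∀ t : ℕ, (∑ k ∈ Finset.Icc 3 (t+3), oddDF k * oddDF (t+6-k)) ≤ 5 * oddDF (t+4) := by
  intro t
  induction t with
  | zero => decide
  | succ t ih =>
    rcases Nat.lt_or_ge t 2 with h | h
    · interval_cases t <;> decide
    · -- real step, t ≥ 2
      have e1 : Finset.Icc 3 (t+1+3) = Finset.Ioc 2 (t+4) := Finset.Icc_add_one_left_eq_Ioc 2 (t+4)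
      rw [e1]
      have split1 : (∑ k ∈ Finset.Ioc 2 4, oddDF k * oddDF (t+1+6-k))
          + (∑ k ∈ Finset.Ioc 4 (t+3), oddDF k * oddDF (t+1+6-k))
          + (∑ k ∈ Finset.Ioc (t+3) (t+4), oddDF k * oddDF (t+1+6-k))
          = ∑ k ∈ Finset.Ioc 2 (t+4), oddDF k * oddDF (t+1+6-k) := by
        rw [Finset.sum_Ioc_consecutive _ (show 2 ≤ 4 by omega) (show 4 ≤ t+3 by omega),
            Finset.sum_Ioc_consecutive _ (show 2 ≤ t+3 by omega) (show t+3 ≤ t+4 by omega)]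
      have e2 : (∑ k ∈ Finset.Ioc 2 4, oddDF k * oddDF (t+1+6-k))
          = 15 * oddDF (t+4) + 105 * oddDF (t+3) := by
        have hio : Finset.Ioc 2 4 = ({3, 4} : Finset ℕ) := by decide
        rw [hio, Finset.sum_insert (by decide), Finset.sum_singleton,
            show t+1+6-3 = t+4 by omega, show t+1+6-4 = t+3 by omega,
            show oddDF 3 = 15 by decide, show oddDF 4 = 105 by decide]
      have e3 : (∑ k ∈ Finset.Ioc (t+3) (t+4), oddDF k * oddDF (t+1+6-k))
          = 15 * oddDF (t+4) := by
        have hio : Finset.Ioc (t+3) (t+4) = {t+4} := by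
          ext x; simp only [Finset.mem_Ioc, Finset.mem_singleton]; omega
        rw [hio, Finset.sum_singleton, show t+1+6-(t+4) = 3 by omega,
            show oddDF 3 = 15 by decide, mul_comm]
      -- middle sum
      set S : ℕ := ∑ j ∈ Finset.Ioc 3 (t+2), oddDF j * oddDF (t+6-j) with hSdef
      have e5 : (∑ k ∈ Finset.Ioc 4 (t+3), oddDF k * oddDF (t+1+6-k)) ≤ (2*t+5) * S := by
        have e4 : Finset.Ioc 4 (t+3) = Finset.map (addRightEmbedding 1) (Finset.Ioc 3 (t+2)) := by
          rw [Finset.map_add_right_Ioc]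
        rw [e4, Finset.sum_map, hSdef, Finset.mul_sum]
        apply Finset.sum_le_sum
        intro j hj
        simp only [Finset.mem_Ioc] at hj
        show oddDF (addRightEmbedding 1 j) * oddDF (t+1+6-(addRightEmbedding 1 j))
            ≤ (2*t+5) * (oddDF j * oddDF (t+6-j))
        have hemb : (addRightEmbedding 1) j = j + 1 := rfl
        rw [hemb, show t+1+6-(j+1) = t+6-j by omega, oddDF_succ, mul_assoc]
        exact Nat.mul_le_mul_right _ (by omega)
      -- relate S to ih
      have hS' : S ≤ (10*t+5) * oddDF (t+3) := by
        have e6 : Finset.Icc 3 (t+3) = Finset.Ioc 2 (t+3) := Finset.Icc_add_one_left_eq_Ioc 2 (t+3)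
        rw [e6] at ih
        have s1 : (∑ k ∈ Finset.Ioc 2 3, oddDF k * oddDF (t+6-k))
            + (∑ k ∈ Finset.Ioc 3 (t+3), oddDF k * oddDF (t+6-k))
            = ∑ k ∈ Finset.Ioc 2 (t+3), oddDF k * oddDF (t+6-k) :=
          Finset.sum_Ioc_consecutive _ (by omega) (by omega)
        have s2 : (∑ k ∈ Finset.Ioc 3 (t+2), oddDF k * oddDF (t+6-k))
            + (∑ k ∈ Finset.Ioc (t+2) (t+3), oddDF k * oddDF (t+6-k))
            = ∑ k ∈ Finset.Ioc 3 (t+3), oddDF k * oddDF (t+6-k) :=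
          Finset.sum_Ioc_consecutive _ (by omega) (by omega)
        have v1 : (∑ k ∈ Finset.Ioc 2 3, oddDF k * oddDF (t+6-k)) = 15 * oddDF (t+3) := by
          rw [show Finset.Ioc 2 3 = ({3} : Finset ℕ) by decide, Finset.sum_singleton,
              show t+6-3 = t+3 by omega, show oddDF 3 = 15 by decide]
        have v2 : (∑ k ∈ Finset.Ioc (t+2) (t+3), oddDF k * oddDF (t+6-k)) = 15 * oddDF (t+3) := by
          have hio : Finset.Ioc (t+2) (t+3) = {t+3} := by
            ext x; simp only [Finset.mem_Ioc, Finset.mem_singleton]; omega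
          rw [hio, Finset.sum_singleton, show t+6-(t+3) = 3 by omega,
              show oddDF 3 = 15 by decide, mul_comm]
        have p4 : oddDF (t+4) = (2*t+7) * oddDF (t+3) := by
          rw [show t+4 = (t+3)+1 by omega, oddDF_succ]; ring_nf
        have hSeq : S = ∑ k ∈ Finset.Ioc 3 (t+2), oddDF k * oddDF (t+6-k) := rfl
        have hS0 : S + 30 * oddDF (t+3) ≤ 5 * oddDF (t+4) := by omega
        rw [p4] at hS0
        nlinarith [hS0]
      -- assemble
      rw [← split1, e2, e3]
      have p4 : oddDF (t+4) = (2*t+7) * oddDF (t+3) := by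
        rw [show t+4 = (t+3)+1 by omega, oddDF_succ]; ring_nf
      have p5 : oddDF (t+1+4) = (2*t+9) * ((2*t+7) * oddDF (t+3)) := by
        rw [show t+1+4 = (t+4)+1 by omega, oddDF_succ, p4]; ring_nf
      rw [p5, p4]
      have hP : 0 < oddDF (t+3) := oddDF_pos _
      nlinarith [e5, hS', hP, h, Nat.mul_le_mul_left (2*t+5) hS']

section main
variable (a : ℕ → ℕ) (h1 : a 1 = 1)
  (hrec : ∀ d, 2 ≤ d → a d = oddDF d - ∑ k ∈ Finset.Icc 1 (d - 1), oddDF (d - k) * a k)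

include h1 hrec

lemma a2 : a 2 = 2 := by
  rw [hrec 2 (by norm_num), show (2:ℕ) - 1 = 1 from rfl,
      show Finset.Icc 1 1 = ({1} : Finset ℕ) from by decide, Finset.sum_singleton, h1]
  norm_num [oddDF, Finset.prod_range_succ]

lemma a3 : a 3 = 10 := by
  rw [hrec 3 (by norm_num), show (3:ℕ) - 1 = 2 from rfl,
      show Finset.Icc 1 2 = ({1, 2} : Finset ℕ) from by decide,
      Finset.sum_insert (by decide), Finset.sum_singleton, h1, a2 a h1 hrec]
  norm_num [oddDF, Finset.prod_range_succ]

lemma a4 : a 4 = 74 := by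
  rw [hrec 4 (by norm_num), show (4:ℕ) - 1 = 3 from rfl,
      show Finset.Icc 1 3 = ({1, 2, 3} : Finset ℕ) from by decide,
      Finset.sum_insert (by decide), Finset.sum_insert (by decide), Finset.sum_singleton,
      h1, a2 a h1 hrec, a3 a h1 hrec]
  norm_num [oddDF, Finset.prod_range_succ]

lemma a5 : a 5 = 706 := by
  rw [hrec 5 (by norm_num), show (5:ℕ) - 1 = 4 from rfl,
      show Finset.Icc 1 4 = ({1, 2, 3, 4} : Finset ℕ) from by decide,
      Finset.sum_insert (by decide), Finset.sum_insert (by decide),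
      Finset.sum_insert (by decide), Finset.sum_singleton,
      h1, a2 a h1 hrec, a3 a h1 hrec, a4 a h1 hrec]
  norm_num [oddDF, Finset.prod_range_succ]

lemma a_triv : ∀ k, 1 ≤ k → a k ≤ oddDF k := by
  intro k hk
  rcases Nat.lt_or_ge k 2 with h | h
  · have : k = 1 := by omega
    subst this; rw [h1]; exact oddDF_pos 1
  · rw [hrec k h]; exact Nat.sub_le _ _


set_option maxHeartbeats 1600000 in
lemma PQ : ∀ m, 4 ≤ m →
    a m + 1 ≤ (2*m-3)^2 * oddDF (m-2) ∧ (2*m-3)^2 * oddDF (m-2) ≤ a m + 10 * oddDF (m-2) := by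
  intro m
  induction m using Nat.strong_induction_on with
  | _ m IH =>
    intro hm
    rcases Nat.lt_or_ge m 6 with hs | hs
    · -- base cases m = 4, 5
      interval_cases m
      · rw [a4 a h1 hrec]
        norm_num [oddDF, Finset.prod_range_succ]
      · rw [a5 a h1 hrec]
        norm_num [oddDF, Finset.prod_range_succ]
    · -- inductive step m = e + 6
      obtain ⟨e, rfl⟩ : ∃ e, m = e + 6 := ⟨m - 6, by omega⟩
      have h4 := IH (e+4) (by omega) (by omega)
      have h5 := IH (e+5) (by omega) (by omega)
      rw [show 2*(e+4)-3 = 2*e+5 by omega, show e+4-2 = e+2 by omega] at h4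
      rw [show 2*(e+5)-3 = 2*e+7 by omega, show e+5-2 = e+3 by omega] at h5
      -- oddDF step identities
      have pe3 : oddDF (e+3) = (2*e+5) * oddDF (e+2) := by
        rw [show e+3 = (e+2)+1 by omega, oddDF_succ]; ring_nf
      have pe4 : oddDF (e+4) = (2*e+7) * oddDF (e+3) := by
        rw [show e+4 = (e+3)+1 by omega, oddDF_succ]; ring_nf
      have pe5 : oddDF (e+5) = (2*e+9) * oddDF (e+4) := by
        rw [show e+5 = (e+4)+1 by omega, oddDF_succ]; ring_nf
      have pe6 : oddDF (e+6) = (2*e+11) * oddDF (e+5) := by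
        rw [show e+6 = (e+5)+1 by omega, oddDF_succ]; ring_nf
      -- the subtracted sum T
      have ha : a (e+6) = oddDF (e+6) - ∑ k ∈ Finset.Icc 1 (e+5), oddDF (e+6-k) * a k := by
        rw [hrec (e+6) (by omega), show e+6-1 = e+5 by omega]
      set T : ℕ := ∑ k ∈ Finset.Icc 1 (e+5), oddDF (e+6-k) * a k with hT
      set M : ℕ := ∑ k ∈ Finset.Ioc 3 (e+3), oddDF (e+6-k) * a k with hM
      -- decomposition of T
      have hTsplit : (oddDF (e+5) * a 1 + oddDF (e+4) * a 2 + oddDF (e+3) * a 3)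
          + M + oddDF 2 * a (e+4) + oddDF 1 * a (e+5) = T := by
        rw [hT, show Finset.Icc 1 (e+5) = Finset.Ioc 0 (e+5) from Finset.Icc_add_one_left_eq_Ioc 0 (e+5)]
        rw [← Finset.sum_Ioc_consecutive (fun k => oddDF (e+6-k) * a k)
              (show 0 ≤ e+4 by omega) (show e+4 ≤ e+5 by omega),
            ← Finset.sum_Ioc_consecutive (fun k => oddDF (e+6-k) * a k)
              (show 0 ≤ e+3 by omega) (show e+3 ≤ e+4 by omega),
            ← Finset.sum_Ioc_consecutive (fun k => oddDF (e+6-k) * a k)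
              (show 0 ≤ 3 by omega) (show 3 ≤ e+3 by omega)]
        have v0 : (∑ k ∈ Finset.Ioc 0 3, oddDF (e+6-k) * a k)
            = oddDF (e+5) * a 1 + oddDF (e+4) * a 2 + oddDF (e+3) * a 3 := by
          rw [show Finset.Ioc 0 3 = ({1, 2, 3} : Finset ℕ) from by decide,
              Finset.sum_insert (by decide), Finset.sum_insert (by decide),
              Finset.sum_singleton, show e+6-1 = e+5 by omega, show e+6-2 = e+4 by omega,
              show e+6-3 = e+3 by omega, add_assoc]
        have v1 : (∑ k ∈ Finset.Ioc (e+3) (e+4), oddDF (e+6-k) * a k) = oddDF 2 * a (e+4) := by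
          have hio : Finset.Ioc (e+3) (e+4) = {e+4} := by
            ext x; simp only [Finset.mem_Ioc, Finset.mem_singleton]; omega
          rw [hio, Finset.sum_singleton, show e+6-(e+4) = 2 by omega]
        have v2 : (∑ k ∈ Finset.Ioc (e+4) (e+5), oddDF (e+6-k) * a k) = oddDF 1 * a (e+5) := by
          have hio : Finset.Ioc (e+4) (e+5) = {e+5} := by
            ext x; simp only [Finset.mem_Ioc, Finset.mem_singleton]; omega
          rw [hio, Finset.sum_singleton, show e+6-(e+5) = 1 by omega]
        rw [v0, v1, v2, hM]
      rw [h1, a2 a h1 hrec, a3 a h1 hrec, show oddDF 2 = 3 from by decide,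
          show oddDF 1 = 1 from by decide, mul_one, one_mul] at hTsplit
      -- bound on the middle sum M
      have hMb : M ≤ 5 * oddDF (e+4) := by
        calc M ≤ ∑ k ∈ Finset.Ioc 3 (e+3), oddDF k * oddDF (e+6-k) := by
              rw [hM]
              apply Finset.sum_le_sum
              intro k hk
              simp only [Finset.mem_Ioc] at hk
              rw [mul_comm]
              exact Nat.mul_le_mul_right _ (a_triv a h1 hrec k (by omega))
          _ ≤ ∑ k ∈ Finset.Icc 3 (e+3), oddDF k * oddDF (e+6-k) := by
              apply Finset.sum_le_sum_of_subset
              rw [show Finset.Icc 3 (e+3) = Finset.Ioc 2 (e+3) from Finset.Icc_add_one_left_eq_Ioc 2 (e+3)]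
              exact Finset.Ioc_subset_Ioc_left (by omega)
          _ ≤ 5 * oddDF (e+4) := lemG e
      -- lower bound on a(e+4)
      have ha4pos : 1 ≤ a (e+4) := by
        have hx : 0 < oddDF (e+2) := oddDF_pos _
        nlinarith [h4.2]
      -- key bounds on T
      have hTlow : 2*((2*e+9) * oddDF (e+4)) + 3 ≤ T := by
        have h52 := h5.2
        rw [pe5] at hTsplit
        rw [pe4] at hTsplit ⊢
        nlinarith [hTsplit, h52, ha4pos, oddDF_pos (e+3), Nat.zero_le M]
      have hThigh : T + (2*e+9)^2 * oddDF (e+4) ≤ oddDF (e+6) + 10 * oddDF (e+4) := by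
        have h41 := h4.1
        have h51 := h5.1
        have hMb' := hMb
        have hTsplit' := hTsplit
        rw [pe5, pe4, pe3] at hTsplit'
        rw [pe4, pe3] at hMb'
        rw [pe3] at h51
        rw [pe6, pe5, pe4, pe3]
        linarith [hTsplit', hMb', h41, h51, oddDF_pos (e+2), Nat.zero_le M]
      -- conclude
      rw [show 2*(e+6)-3 = 2*e+9 by omega, show e+6-2 = e+4 by omega]
      rw [ha]
      have hpd : oddDF (e+6) = (2*e+9)^2 * oddDF (e+4) + 2*((2*e+9) * oddDF (e+4)) := by
        rw [pe6, pe5]; ring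
      have hZX : 10 * oddDF (e+4) ≤ (2*e+9)^2 * oddDF (e+4) :=
        mul_le_mul_left (show 10 ≤ (2*e+9)^2 by nlinarith) (oddDF (e+4))
      rw [hpd] at hThigh ⊢
      generalize (2*e+9)^2 * oddDF (e+4) = Z at *
      generalize (2*e+9) * oddDF (e+4) = Y at *
      generalize oddDF (e+4) = X at *
      omega


end main

/-- If `a(1)=1`, `a(d) = (2d-1)!! − ∑_{k=1}^{d-1}(2d-2k-1)!!·a(k)` for `d ≥ 2`, and
`b(d) = ((2d-3)²+1)·(2d-5)!!`, then for all `d ≥ 4`,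
`a(d)/b(d) < 1 − 1/((2d-3)²+1)`, i.e. `a(d)·((2d-3)²+1) < b(d)·(2d-3)²`. -/
theorem a_div_b_bound (a b : ℕ → ℕ) (h1 : a 1 = 1)
    (hrec : ∀ d, 2 ≤ d → a d = oddDF d - ∑ k ∈ Finset.Icc 1 (d - 1), oddDF (d - k) * a k)
    (hb : ∀ d, b d = ((2 * d - 3) ^ 2 + 1) * oddDF (d - 2)) :
    ∀ d, 4 ≤ d → a d * ((2 * d - 3) ^ 2 + 1) < b d * (2 * d - 3) ^ 2 := by
  intro d hd
  have hP := (PQ a h1 hrec d hd).1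
  rw [hb d]
  nlinarith [hP, mul_le_mul_left hP ((2*d-3)^2+1), oddDF_pos (d-2)]
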